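/- Let A and B be nonempty finite types, let ψ : A × B → ℂ be a unit vector in the Euclidean space ℂ^{A×B}, let φ : A → ℂ be a unit vector in ℂ^{A}, and let 0 < ε ≤ 1. If D(Tr_B |ψ⟩⟨ψ|, |φ⟩⟨φ|) < ε, then there exists a unit vector γ : B → ℂ such that D(|ψ⟩⟨ψ|, |φ⊗γ⟩⟨φ⊗γ|) < 2√ε, where (φ⊗γ)(a,b) = φ(a)·γ(b). -/

import Mathlib

open scoped BigOperators Classical ComplexOrder

/-- A density matrix: positive semidefinite with trace one. -/
def IsDensity {ι : Type*} [Fintype ι] [DecidableEq ι] (ρ : Matrix ι ι ℂ) : Prop :=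
  ρ.PosSemidef ∧ ρ.trace = 1

/-- The trace distance `D(ρ,σ) = Tr|ρ−σ|`: the sum of the absolute values of the
eigenvalues of the Hermitian matrix `ρ − σ` (no factor 1/2). -/
noncomputable def traceDist {ι : Type*} [Fintype ι] [DecidableEq ι]
    (ρ σ : Matrix ι ι ℂ) : ℝ :=
  if h : (ρ - σ).IsHermitian then ∑ i, |h.eigenvalues i| else 0

/-- The minimal dimension `𝒮(ρ,δ)` of a `δ`-significant subspace: the minimum rank of an
orthogonal projection `P` (`P = Pᴴ = P²`) with `Tr(Pρ) ≥ δ`. -/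
noncomputable def sigDim {ι : Type*} [Fintype ι] [DecidableEq ι]
    (ρ : Matrix ι ι ℂ) (δ : ℝ) : ℕ :=
  sInf {m : ℕ | ∃ P : Matrix ι ι ℂ,
    P.IsHermitian ∧ P * P = P ∧ δ ≤ ((P * ρ).trace).re ∧ P.rank = m}

/-- The `n`-fold Kronecker power of `ρ`, indexed by `Fin n → ι`. -/
noncomputable def kronPow {ι : Type*} (ρ : Matrix ι ι ℂ) (n : ℕ) :
    Matrix (Fin n → ι) (Fin n → ι) ℂ :=
  Matrix.of fun i j => ∏ k, ρ (i k) (j k)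

/-- The rank-one matrix `|u⟩⟨u|`. -/
noncomputable def outer {ι : Type*} (u : ι → ℂ) : Matrix ι ι ℂ :=
  Matrix.of fun i j => u i * starRingEnd ℂ (u j)

/-- The partial trace over the second subsystem. -/
noncomputable def ptraceB {A B : Type*} [Fintype B]
    (M : Matrix (A × B) (A × B) ℂ) : Matrix A A ℂ :=
  Matrix.of fun a a' => ∑ b, M (a, b) (a', b)

set_option linter.unusedSectionVars false

noncomputable def ketbra {ι : Type*} (u w : ι → ℂ) : Matrix ι ι ℂ :=
  Matrix.of fun i j => u i * starRingEnd ℂ (w j)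

lemma outer_eq_ketbra {ι : Type*} (u : ι → ℂ) : outer u = ketbra u u := rfl

lemma ketbra_mul {ι : Type*} [Fintype ι] (a b c d : ι → ℂ) :
    ketbra a b * ketbra c d = (∑ k, starRingEnd ℂ (b k) * c k) • ketbra a d := by
  ext i j
  simp only [Matrix.mul_apply, ketbra, Matrix.of_apply, Matrix.smul_apply, smul_eq_mul,
    Finset.sum_mul]
  rw [Finset.sum_congr rfl]
  intro k _
  ring

lemma ketbra_trace {ι : Type*} [Fintype ι] (u w : ι → ℂ) :
    (ketbra u w).trace = ∑ i, u i * starRingEnd ℂ (w i) := by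
  simp [Matrix.trace, Matrix.diag, ketbra]

lemma outer_isHermitian {ι : Type*} (u : ι → ℂ) : (outer u).IsHermitian := by
  ext i j
  simp [outer, Matrix.conjTranspose_apply, mul_comm]

lemma sum_conj_mul_eq {ι : Type*} [Fintype ι] (u : ι → ℂ) :
    ∑ i, starRingEnd ℂ (u i) * u i = ((∑ i, ‖u i‖ ^ 2 : ℝ) : ℂ) := by
  rw [Complex.ofReal_sum]
  refine Finset.sum_congr rfl fun i _ => ?_
  rw [mul_comm, Complex.mul_conj, Complex.normSq_eq_norm_sq]

lemma unit_sum_conj_mul {ι : Type*} [Fintype ι] (u : ι → ℂ) (hu : ∑ i, ‖u i‖ ^ 2 = 1) :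
    ∑ i, starRingEnd ℂ (u i) * u i = 1 := by
  have : ∀ i, starRingEnd ℂ (u i) * u i = ((‖u i‖ ^ 2 : ℝ) : ℂ) := by
    intro i
    rw [Complex.conj_mul']
    norm_cast
  rw [Finset.sum_congr rfl fun i _ => this i, ← Complex.ofReal_sum, hu, Complex.ofReal_one]

lemma mul_ketbra {ι : Type*} [Fintype ι] (A : Matrix ι ι ℂ) (u w : ι → ℂ) :
    A * ketbra u w = ketbra (A.mulVec u) w := by
  ext i j
  simp only [Matrix.mul_apply, ketbra, Matrix.of_apply, Matrix.mulVec, dotProduct,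
    Finset.sum_mul]
  exact Finset.sum_congr rfl fun k _ => by ring

lemma ketbra_mul_right {ι : Type*} [Fintype ι] (B : Matrix ι ι ℂ) (u w : ι → ℂ) :
    ketbra u w * B = ketbra u (B.conjTranspose.mulVec w) := by
  ext i j
  simp only [Matrix.mul_apply, ketbra, Matrix.of_apply, Matrix.mulVec, dotProduct,
    Matrix.conjTranspose_apply, map_sum, map_mul, Complex.star_def, Complex.conj_conj,
    Finset.mul_sum]
  exact Finset.sum_congr rfl fun k _ => by ring

lemma conj_ketbra {ι : Type*} [Fintype ι] (A B : Matrix ι ι ℂ) (u w : ι → ℂ) :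
    A * ketbra u w * B = ketbra (A.mulVec u) (B.conjTranspose.mulVec w) := by
  rw [mul_ketbra, ketbra_mul_right]

lemma ketbra_trace_norm {ι : Type*} [Fintype ι] (v : ι → ℂ) :
    (ketbra v v).trace = ((∑ i, ‖v i‖ ^ 2 : ℝ) : ℂ) := by
  rw [ketbra_trace, Complex.ofReal_sum]
  refine Finset.sum_congr rfl fun i _ => ?_
  rw [mul_comm, Complex.conj_mul']
  norm_cast

section spectral
variable {ι : Type*} [Fintype ι] [DecidableEq ι] {M : Matrix ι ι ℂ} (hM : M.IsHermitian)

lemma abs_re_trace_outer_mul_le (x : ι → ℂ) (hx : ∑ i, ‖x i‖ ^ 2 = 1) :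
    |((outer x * M).trace).re| ≤ ∑ i, |hM.eigenvalues i| := by
  have hUU : (hM.eigenvectorUnitary : Matrix ι ι ℂ) * star (hM.eigenvectorUnitary : Matrix ι ι ℂ) = 1 :=
    (Matrix.mem_unitaryGroup_iff).mp (hM.eigenvectorUnitary).2
  set U : Matrix ι ι ℂ := (hM.eigenvectorUnitary : Matrix ι ι ℂ) with hU
  set y : ι → ℂ := (U.conjTranspose).mulVec x with hy
  have hcj : star U * ketbra x x * U = ketbra y y := by
    rw [conj_ketbra, Matrix.star_eq_conjTranspose]
  have key : (outer x * M).trace = (ketbra y y * Matrix.diagonal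
      (RCLike.ofReal ∘ hM.eigenvalues)).trace := by
    conv_lhs => rw [hM.spectral_theorem, Unitary.conjStarAlgAut_apply]
    rw [← Matrix.mul_assoc, ← Matrix.mul_assoc, Matrix.trace_mul_cycle, ← Matrix.mul_assoc,
      outer_eq_ketbra, hcj]
  have hynorm : ∑ i, ‖y i‖ ^ 2 = 1 := by
    have t1 : (ketbra y y).trace = (ketbra x x).trace := by
      rw [← hcj, Matrix.trace_mul_cycle, hUU, Matrix.one_mul]
    rw [ketbra_trace_norm, ketbra_trace_norm, hx] at t1
    exact_mod_cast t1
  rw [key]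
  have tre : ((ketbra y y * Matrix.diagonal (RCLike.ofReal ∘ hM.eigenvalues)).trace).re
      = ∑ i, ‖y i‖ ^ 2 * hM.eigenvalues i := by
    rw [Matrix.trace, Complex.re_sum]
    refine Finset.sum_congr rfl fun i _ => ?_
    simp only [Matrix.diag_apply, Matrix.mul_diagonal, ketbra, Matrix.of_apply,
      Function.comp_apply]
    have hco : (RCLike.ofReal (hM.eigenvalues i) : ℂ) = ((hM.eigenvalues i : ℝ) : ℂ) := rfl
    rw [hco, mul_comm (y i), Complex.conj_mul']
    norm_cast
  rw [tre]
  calc |∑ i, ‖y i‖ ^ 2 * hM.eigenvalues i| ≤ ∑ i, |‖y i‖ ^ 2 * hM.eigenvalues i| :=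
        Finset.abs_sum_le_sum_abs _ _
    _ ≤ ∑ i, |hM.eigenvalues i| := by
        refine Finset.sum_le_sum fun i _ => ?_
        rw [abs_mul, abs_of_nonneg (by positivity : (0:ℝ) ≤ ‖y i‖ ^ 2)]
        have h1 : ‖y i‖ ^ 2 ≤ 1 := by
          rw [← hynorm]
          exact Finset.single_le_sum (f := fun j => ‖y j‖ ^ 2)
            (fun j _ => by positivity) (Finset.mem_univ i)
        nlinarith [abs_nonneg (hM.eigenvalues i)]

end spectral

section spectral2
variable {ι : Type*} [Fintype ι] [DecidableEq ι] {M : Matrix ι ι ℂ} (hM : M.IsHermitian)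

lemma spectral_sq : M * M = (hM.eigenvectorUnitary : Matrix ι ι ℂ) *
    (Matrix.diagonal (RCLike.ofReal ∘ hM.eigenvalues) *
     Matrix.diagonal (RCLike.ofReal ∘ hM.eigenvalues)) *
    star (hM.eigenvectorUnitary : Matrix ι ι ℂ) := by
  have h1 : star (hM.eigenvectorUnitary : Matrix ι ι ℂ) *
      (hM.eigenvectorUnitary : Matrix ι ι ℂ) = 1 :=
    (Matrix.mem_unitaryGroup_iff').mp (hM.eigenvectorUnitary).2
  conv_lhs => rw [hM.spectral_theorem, Unitary.conjStarAlgAut_apply]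
  simp only [Matrix.mul_assoc]
  rw [← Matrix.mul_assoc (star _) _ _, h1, Matrix.one_mul]

lemma spectral_cube : M * M * M = (hM.eigenvectorUnitary : Matrix ι ι ℂ) *
    (Matrix.diagonal (RCLike.ofReal ∘ hM.eigenvalues) *
     Matrix.diagonal (RCLike.ofReal ∘ hM.eigenvalues) *
     Matrix.diagonal (RCLike.ofReal ∘ hM.eigenvalues)) *
    star (hM.eigenvectorUnitary : Matrix ι ι ℂ) := by
  have h1 : star (hM.eigenvectorUnitary : Matrix ι ι ℂ) *
      (hM.eigenvectorUnitary : Matrix ι ι ℂ) = 1 :=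
    (Matrix.mem_unitaryGroup_iff').mp (hM.eigenvectorUnitary).2
  have hcan : ∀ X : Matrix ι ι ℂ, star (hM.eigenvectorUnitary : Matrix ι ι ℂ) *
      ((hM.eigenvectorUnitary : Matrix ι ι ℂ) * X) = X := fun X => by
    rw [← Matrix.mul_assoc, h1, Matrix.one_mul]
  conv_lhs => rw [hM.spectral_theorem, Unitary.conjStarAlgAut_apply]
  simp only [Matrix.mul_assoc, hcan]

lemma trace_sq_eq_sum_sq : (M * M).trace = ((∑ i, hM.eigenvalues i ^ 2 : ℝ) : ℂ) := by
  have h1 : star (hM.eigenvectorUnitary : Matrix ι ι ℂ) *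
      (hM.eigenvectorUnitary : Matrix ι ι ℂ) = 1 :=
    (Matrix.mem_unitaryGroup_iff').mp (hM.eigenvectorUnitary).2
  rw [spectral_sq hM, Matrix.trace_mul_cycle, ← Matrix.mul_assoc, h1, Matrix.one_mul,
    Matrix.diagonal_mul_diagonal, Matrix.trace_diagonal]
  push_cast
  refine Finset.sum_congr rfl fun i _ => ?_
  simp [Function.comp, pow_two]

lemma eigenvalues_cubic (c : ℝ) (hc : M * M * M = (c : ℂ) • M) (i : ι) :
    hM.eigenvalues i ^ 3 = c * hM.eigenvalues i := by
  have h1 : star (hM.eigenvectorUnitary : Matrix ι ι ℂ) *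
      (hM.eigenvectorUnitary : Matrix ι ι ℂ) = 1 :=
    (Matrix.mem_unitaryGroup_iff').mp (hM.eigenvectorUnitary).2
  have h2 : (hM.eigenvectorUnitary : Matrix ι ι ℂ) *
      star (hM.eigenvectorUnitary : Matrix ι ι ℂ) = 1 :=
    (Matrix.mem_unitaryGroup_iff).mp (hM.eigenvectorUnitary).2
  set U : Matrix ι ι ℂ := (hM.eigenvectorUnitary : Matrix ι ι ℂ)
  set D : Matrix ι ι ℂ := Matrix.diagonal (RCLike.ofReal ∘ hM.eigenvalues) with hD
  have key : D * D * D = (c : ℂ) • D := by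
    have e1 : U * (D * D * D) * star U = U * ((c:ℂ) • D) * star U := by
      rw [← spectral_cube hM, hc]
      conv_lhs => rw [hM.spectral_theorem, Unitary.conjStarAlgAut_apply]
      rw [mul_smul_comm, smul_mul_assoc]
    have e2 := congrArg (fun Z => star U * Z * U) e1
    simpa only [Matrix.mul_assoc, ← Matrix.mul_assoc (star U) U, h1, Matrix.one_mul,
      Matrix.mul_one, h2] using e2
  have key2 := congrArg (fun Z : Matrix ι ι ℂ => Z i i) key
  simp only [hD, Matrix.diagonal_mul_diagonal, Matrix.smul_apply, Matrix.diagonal_apply_eq,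
    Function.comp_apply, smul_eq_mul, Pi.mul_apply] at key2
  have key2' : ((hM.eigenvalues i : ℝ) : ℂ) * ((hM.eigenvalues i : ℝ) : ℂ) *
      ((hM.eigenvalues i : ℝ) : ℂ) = ((c : ℝ) : ℂ) * ((hM.eigenvalues i : ℝ) : ℂ) := key2
  have hre : ((hM.eigenvalues i ^ 3 : ℝ) : ℂ) = ((c * hM.eigenvalues i : ℝ) : ℂ) := by
    push_cast
    linear_combination key2'
  exact_mod_cast hre

end spectral2


lemma norm_one_of_sum {ι : Type*} [Fintype ι] (u : ι → ℂ) (hu : ∑ i, ‖u i‖ ^ 2 = 1) :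
    ‖(WithLp.equiv 2 (ι → ℂ)).symm u‖ = 1 := by
  have h : ‖(WithLp.equiv 2 (ι → ℂ)).symm u‖ ^ 2 = ∑ i, ‖u i‖ ^ 2 := by
    rw [EuclideanSpace.norm_eq, Real.sq_sqrt]
    · rfl
    · positivity
  rw [hu] at h
  nlinarith [norm_nonneg ((WithLp.equiv 2 (ι → ℂ)).symm u)]

lemma norm_overlap_le_one {ι : Type*} [Fintype ι] (u w : ι → ℂ)
    (hu : ∑ i, ‖u i‖ ^ 2 = 1) (hw : ∑ i, ‖w i‖ ^ 2 = 1) :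
    ‖∑ k, starRingEnd ℂ (w k) * u k‖ ≤ 1 := by
  have hinner : (inner ℂ ((WithLp.equiv 2 (ι → ℂ)).symm w) ((WithLp.equiv 2 (ι → ℂ)).symm u) : ℂ)
      = ∑ k, starRingEnd ℂ (w k) * u k := by
    simp [PiLp.inner_apply, RCLike.inner_apply, mul_comm]
  calc ‖∑ k, starRingEnd ℂ (w k) * u k‖
      = ‖(inner ℂ ((WithLp.equiv 2 (ι → ℂ)).symm w) ((WithLp.equiv 2 (ι → ℂ)).symm u) : ℂ)‖ := by
        rw [hinner]
    _ ≤ ‖(WithLp.equiv 2 (ι → ℂ)).symm w‖ * ‖(WithLp.equiv 2 (ι → ℂ)).symm u‖ :=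
        norm_inner_le_norm _ _
    _ = 1 := by rw [norm_one_of_sum u hu, norm_one_of_sum w hw, mul_one]

section purepure
variable {ι : Type*} [Fintype ι] [DecidableEq ι]

lemma M_sq (u w : ι → ℂ) (hu : ∑ i, ‖u i‖ ^ 2 = 1) (hw : ∑ i, ‖w i‖ ^ 2 = 1) :
    (outer u - outer w) * (outer u - outer w) =
      outer u + outer w - (∑ k, starRingEnd ℂ (u k) * w k) • ketbra u w
        - (∑ k, starRingEnd ℂ (w k) * u k) • ketbra w u := by
  simp only [outer_eq_ketbra, sub_mul, mul_sub, ketbra_mul,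
    unit_sum_conj_mul u hu, unit_sum_conj_mul w hw, one_smul]
  abel

lemma M_cube (u w : ι → ℂ) (hu : ∑ i, ‖u i‖ ^ 2 = 1) (hw : ∑ i, ‖w i‖ ^ 2 = 1) :
    (outer u - outer w) * (outer u - outer w) * (outer u - outer w) =
      ((1 : ℂ) - (∑ k, starRingEnd ℂ (u k) * w k) * (∑ k, starRingEnd ℂ (w k) * u k)) •
        (outer u - outer w) := by
  rw [M_sq u w hu hw]
  simp only [outer_eq_ketbra, sub_mul, add_mul, mul_sub, smul_mul_assoc, ketbra_mul,
    unit_sum_conj_mul u hu, unit_sum_conj_mul w hw, one_smul, smul_smul, smul_sub, sub_smul]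
  module

lemma trace_M_sq (u w : ι → ℂ) (hu : ∑ i, ‖u i‖ ^ 2 = 1) (hw : ∑ i, ‖w i‖ ^ 2 = 1) :
    ((outer u - outer w) * (outer u - outer w)).trace
      = ((2 - 2 * ‖∑ k, starRingEnd ℂ (w k) * u k‖ ^ 2 : ℝ) : ℂ) := by
  rw [M_sq u w hu hw]
  rw [Matrix.trace_sub, Matrix.trace_sub, Matrix.trace_add, Matrix.trace_smul,
    Matrix.trace_smul, ketbra_trace, ketbra_trace, outer_eq_ketbra, outer_eq_ketbra,
    ketbra_trace_norm, ketbra_trace_norm, hu, hw]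
  have h1 : ∑ i, u i * starRingEnd ℂ (w i) = ∑ k, starRingEnd ℂ (w k) * u k :=
    Finset.sum_congr rfl fun i _ => mul_comm _ _
  have h2 : ∑ i, w i * starRingEnd ℂ (u i)
      = starRingEnd ℂ (∑ k, starRingEnd ℂ (w k) * u k) := by
    rw [map_sum]
    exact Finset.sum_congr rfl fun i _ => by simp [mul_comm]
  have h3 : ∑ k, starRingEnd ℂ (u k) * w k
      = starRingEnd ℂ (∑ k, starRingEnd ℂ (w k) * u k) := by
    rw [map_sum]
    exact Finset.sum_congr rfl fun i _ => by simp [mul_comm]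
  rw [h1, h2, h3]
  set s := ∑ k, starRingEnd ℂ (w k) * u k
  rw [smul_eq_mul, smul_eq_mul]
  have : starRingEnd ℂ s * s = ((‖s‖ ^ 2 : ℝ) : ℂ) := by
    rw [mul_comm, Complex.mul_conj, Complex.normSq_eq_norm_sq]
  push_cast
  rw [mul_comm s (starRingEnd ℂ s), this]
  push_cast
  ring

lemma traceDist_outer_le (u w : ι → ℂ) (hu : ∑ i, ‖u i‖ ^ 2 = 1)
    (hw : ∑ i, ‖w i‖ ^ 2 = 1) :
    traceDist (outer u) (outer w)
      ≤ 2 * Real.sqrt (1 - ‖∑ k, starRingEnd ℂ (w k) * u k‖ ^ 2) := by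
  set s := ∑ k, starRingEnd ℂ (w k) * u k with hs
  have hM : (outer u - outer w).IsHermitian := (outer_isHermitian u).sub (outer_isHermitian w)
  rw [traceDist, dif_pos hM]
  have hs1 : ‖s‖ ≤ 1 := norm_overlap_le_one u w hu hw
  have h1s : (0 : ℝ) ≤ 1 - ‖s‖ ^ 2 := by nlinarith [norm_nonneg s]
  set t := Real.sqrt (1 - ‖s‖ ^ 2) with ht
  have ht0 : 0 ≤ t := Real.sqrt_nonneg _
  have ht2 : t ^ 2 = 1 - ‖s‖ ^ 2 := Real.sq_sqrt h1s
  -- cube identity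
  have hsconj : (∑ k, starRingEnd ℂ (u k) * w k) = starRingEnd ℂ s := by
    rw [hs, map_sum]
    exact Finset.sum_congr rfl fun i _ => by simp [mul_comm]
  have hcoef : (1 : ℂ) - (∑ k, starRingEnd ℂ (u k) * w k) * s = ((1 - ‖s‖ ^ 2 : ℝ) : ℂ) := by
    rw [hsconj, mul_comm, Complex.mul_conj, Complex.normSq_eq_norm_sq]
    push_cast
    norm_cast
  have hcube : (outer u - outer w) * (outer u - outer w) * (outer u - outer w)
      = (((1 - ‖s‖ ^ 2 : ℝ) : ℂ)) • (outer u - outer w) := by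
    rw [M_cube u w hu hw, ← hs, hcoef]
  have heig := eigenvalues_cubic hM (1 - ‖s‖ ^ 2) hcube
  -- per-eigenvalue identity
  have habs : ∀ i, |hM.eigenvalues i| * t = hM.eigenvalues i ^ 2 := by
    intro i
    have hzero : hM.eigenvalues i * (hM.eigenvalues i ^ 2 - t ^ 2) = 0 := by
      linear_combination heig i - hM.eigenvalues i * ht2
    rcases mul_eq_zero.mp hzero with h | h
    · rw [h]; simp
    · have hsq : hM.eigenvalues i ^ 2 = t ^ 2 := by linarith
      have habse : |hM.eigenvalues i| = t := by
        have := Real.sqrt_sq_eq_abs (hM.eigenvalues i)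
        rw [hsq, Real.sqrt_sq ht0] at this
        exact this.symm
      rw [habse, hsq]
      ring
  -- sum of squares
  have hsum : ∑ i, hM.eigenvalues i ^ 2 = 2 - 2 * ‖s‖ ^ 2 := by
    have h1 := trace_sq_eq_sum_sq hM
    rw [trace_M_sq u w hu hw, ← hs] at h1
    exact_mod_cast h1.symm
  have hsum2 : (∑ i, |hM.eigenvalues i|) * t = 2 * t ^ 2 := by
    rw [Finset.sum_mul, Finset.sum_congr rfl fun i _ => habs i, hsum, ht2]
    ring
  rcases eq_or_lt_of_le ht0 with h0 | h0
  · -- t = 0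
    have : ∀ i, |hM.eigenvalues i| = 0 := by
      intro i
      have := habs i
      rw [← h0] at this
      simp at this
      nlinarith [abs_nonneg (hM.eigenvalues i), sq_abs (hM.eigenvalues i)]
    rw [Finset.sum_congr rfl fun i _ => this i]
    simp [← h0]
  · have := mul_right_cancel₀ (ne_of_gt h0) (by rw [hsum2]; ring : (∑ i, |hM.eigenvalues i|) * t = (2 * t) * t)
    rw [this]
end purepure


section main
variable {A B : Type*} [Fintype A] [DecidableEq A] [Fintype B] [DecidableEq B]

lemma ptraceB_outer_isHermitian (ψ : A × B → ℂ) : (ptraceB (outer ψ)).IsHermitian := by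
  ext a a'
  simp only [Matrix.conjTranspose_apply, ptraceB, outer, Matrix.of_apply, map_sum, map_mul,
    Complex.star_def, Complex.conj_conj]
  exact Finset.sum_congr rfl fun b _ => by ring

lemma trace_outer_mul_ptrace (ψ : A × B → ℂ) (φ : A → ℂ) :
    (outer φ * ptraceB (outer ψ)).trace
      = ∑ b, (∑ a, starRingEnd ℂ (φ a) * ψ (a, b)) *
          starRingEnd ℂ (∑ a, starRingEnd ℂ (φ a) * ψ (a, b)) := by
  simp only [Matrix.trace, Matrix.diag_apply, Matrix.mul_apply, outer, ptraceB,
    Matrix.of_apply, map_sum, map_mul, Complex.conj_conj, Finset.mul_sum, Finset.sum_mul]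
  -- LHS : ∑ a, ∑ c, ∑ b, ... ; RHS : ∑ b, ∑ c?, ...
  rw [Finset.sum_congr rfl fun a _ => Finset.sum_comm]
  rw [Finset.sum_comm]
  refine Finset.sum_congr rfl fun b _ =>
    Finset.sum_congr rfl fun a _ => Finset.sum_congr rfl fun c _ => by ring

end main


/-- near-pure reduced states: if the reduced state of the pure state `ψ` on `A×B`
is within trace distance `ε` of the pure state `φ` on `A`, then `ψ` is within trace distance
`2√ε` of a product state `φ ⊗ γ` for some unit vector `γ` on `B`. -/
theorem exists_product_approx_of_reduced_near_pure {A B : Type*}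
    [Fintype A] [DecidableEq A] [Nonempty A] [Fintype B] [DecidableEq B] [Nonempty B]
    (ψ : A × B → ℂ) (hψ : ∑ ab, ‖ψ ab‖ ^ 2 = 1)
    (φ : A → ℂ) (hφ : ∑ a, ‖φ a‖ ^ 2 = 1)
    (ε : ℝ) (hε0 : 0 < ε) (hε1 : ε ≤ 1)
    (hD : traceDist (ptraceB (outer ψ)) (outer φ) < ε) :
    ∃ γ : B → ℂ, (∑ b, ‖γ b‖ ^ 2 = 1) ∧
      traceDist (outer ψ) (outer fun ab => φ ab.1 * γ ab.2) < 2 * Real.sqrt ε := by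
  set v : B → ℂ := fun b => ∑ a, starRingEnd ℂ (φ a) * ψ (a, b) with hv
  set F : ℝ := ∑ b, ‖v b‖ ^ 2 with hF
  have hF0 : 0 ≤ F := Finset.sum_nonneg fun b _ => by positivity
  -- fidelity bound
  have htr1 : (outer φ * ptraceB (outer ψ)).trace = ((F : ℝ) : ℂ) := by
    rw [trace_outer_mul_ptrace ψ φ, hF, Complex.ofReal_sum]
    refine Finset.sum_congr rfl fun b _ => ?_
    rw [Complex.mul_conj, Complex.normSq_eq_norm_sq]
  have htr2 : (outer φ * outer φ).trace = 1 := by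
    rw [outer_eq_ketbra, ketbra_mul, unit_sum_conj_mul φ hφ, one_smul,
      ketbra_trace_norm, hφ, Complex.ofReal_one]
  have hHerm : (ptraceB (outer ψ) - outer φ).IsHermitian :=
    (ptraceB_outer_isHermitian ψ).sub (outer_isHermitian φ)
  have hTD : traceDist (ptraceB (outer ψ)) (outer φ) = ∑ i, |hHerm.eigenvalues i| := by
    rw [traceDist, dif_pos hHerm]
  have hbound := abs_re_trace_outer_mul_le hHerm φ hφ
  have htr3 : ((outer φ * (ptraceB (outer ψ) - outer φ)).trace).re = F - 1 := by
    rw [Matrix.mul_sub, Matrix.trace_sub, htr1, htr2]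
    simp
  have hFe : 1 - F < ε := by
    rw [htr3] at hbound
    rw [hTD] at hD
    have : |F - 1| ≤ ∑ i, |hHerm.eigenvalues i| := hbound
    have h2 : 1 - F ≤ |F - 1| := by
      rw [abs_sub_comm]
      exact le_abs_self _
    linarith
  have hFpos : 0 < F := by linarith
  have hsF : Real.sqrt F > 0 := Real.sqrt_pos.mpr hFpos
  have hsF2 : Real.sqrt F ^ 2 = F := Real.sq_sqrt hF0
  -- define γ
  refine ⟨fun b => v b / ((Real.sqrt F : ℝ) : ℂ), ?_, ?_⟩
  · have : ∀ b, ‖v b / ((Real.sqrt F : ℝ) : ℂ)‖ ^ 2 = ‖v b‖ ^ 2 / F := by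
      intro b
      rw [norm_div, Complex.norm_real, Real.norm_eq_abs, abs_of_pos hsF, div_pow, hsF2]
    rw [Finset.sum_congr rfl fun b _ => this b, ← Finset.sum_div, ← hF, div_self (ne_of_gt hFpos)]
  · set γ : B → ℂ := fun b => v b / ((Real.sqrt F : ℝ) : ℂ) with hγ
    set χ : A × B → ℂ := fun ab => φ ab.1 * γ ab.2 with hχ
    have hγnorm : ∑ b, ‖γ b‖ ^ 2 = 1 := by
      have : ∀ b, ‖γ b‖ ^ 2 = ‖v b‖ ^ 2 / F := by
        intro b
        rw [hγ]
        rw [norm_div, Complex.norm_real, Real.norm_eq_abs, abs_of_pos hsF, div_pow, hsF2]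
      rw [Finset.sum_congr rfl fun b _ => this b, ← Finset.sum_div, ← hF,
        div_self (ne_of_gt hFpos)]
    have hχnorm : ∑ ab, ‖χ ab‖ ^ 2 = 1 := by
      rw [Fintype.sum_prod_type]
      have : ∀ a b, ‖χ (a, b)‖ ^ 2 = ‖φ a‖ ^ 2 * ‖γ b‖ ^ 2 := by
        intro a b
        rw [hχ]
        simp [norm_mul, mul_pow]
      calc ∑ a, ∑ b, ‖χ (a, b)‖ ^ 2 = ∑ a, ∑ b, ‖φ a‖ ^ 2 * ‖γ b‖ ^ 2 := by
            exact Finset.sum_congr rfl fun a _ => Finset.sum_congr rfl fun b _ => this a b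
        _ = ∑ a, ‖φ a‖ ^ 2 * ∑ b, ‖γ b‖ ^ 2 := by
            exact Finset.sum_congr rfl fun a _ => (Finset.mul_sum _ _ _).symm
        _ = 1 := by rw [Finset.sum_congr rfl fun a _ => by rw [hγnorm, mul_one], hφ]
    -- overlap
    have hover : (∑ k, starRingEnd ℂ (χ k) * ψ k) = ((Real.sqrt F : ℝ) : ℂ) := by
      rw [Fintype.sum_prod_type]
      have step : ∀ a b, starRingEnd ℂ (χ (a, b)) * ψ (a, b)
          = (starRingEnd ℂ (v b) * (starRingEnd ℂ (φ a) * ψ (a, b))) / ((Real.sqrt F : ℝ) : ℂ) := by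
        intro a b
        rw [hχ, hγ]
        simp only [map_mul, map_div₀, Complex.conj_ofReal]
        field_simp
      calc ∑ a, ∑ b, starRingEnd ℂ (χ (a, b)) * ψ (a, b)
          = ∑ a, ∑ b, (starRingEnd ℂ (v b) * (starRingEnd ℂ (φ a) * ψ (a, b))) / ((Real.sqrt F : ℝ) : ℂ) :=
            Finset.sum_congr rfl fun a _ => Finset.sum_congr rfl fun b _ => step a b
        _ = (∑ b, starRingEnd ℂ (v b) * v b) / ((Real.sqrt F : ℝ) : ℂ) := by
            rw [Finset.sum_comm]
            simp only [← Finset.sum_div]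
            congr 1
            refine Finset.sum_congr rfl fun b _ => ?_
            rw [hv]
            simp only [Finset.mul_sum]
        _ = ((F : ℝ) : ℂ) / ((Real.sqrt F : ℝ) : ℂ) := by
            rw [sum_conj_mul_eq, ← hF]
        _ = ((Real.sqrt F : ℝ) : ℂ) := by
            have hFc : ((F : ℝ) : ℂ) = ((Real.sqrt F : ℝ) : ℂ) * ((Real.sqrt F : ℝ) : ℂ) := by
              rw [← Complex.ofReal_mul, ← pow_two, hsF2]
            rw [hFc, mul_div_assoc,
              div_self (Complex.ofReal_ne_zero.mpr (ne_of_gt hsF)), mul_one]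
    have hle := traceDist_outer_le ψ χ hψ hχnorm
    rw [hover] at hle
    have hnormF : ‖((Real.sqrt F : ℝ) : ℂ)‖ ^ 2 = F := by
      rw [Complex.norm_real, Real.norm_eq_abs, abs_of_pos hsF]
      exact hsF2
    rw [hnormF] at hle
    have hsle1 : ‖((Real.sqrt F : ℝ) : ℂ)‖ ≤ 1 := by
      rw [← hover]
      exact norm_overlap_le_one ψ χ hψ hχnorm
    have hFle1 : F ≤ 1 := by
      rw [← hnormF]
      nlinarith [norm_nonneg ((Real.sqrt F : ℝ) : ℂ)]
    have hlt : Real.sqrt (1 - F) < Real.sqrt ε :=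
      Real.sqrt_lt_sqrt (by linarith) hFe
    calc traceDist (outer ψ) (outer χ) ≤ 2 * Real.sqrt (1 - F) := hle
      _ < 2 * Real.sqrt ε := by linarith
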